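/- Let E be a finite-dimensional real inner product space and let f : E → ℝ be a convex Lipschitz function. Suppose slope_f assumes a negative value, and let ξ be a unit vector at which slope_f attains its minimum over the unit sphere of E (so slope_f(ξ) < 0). Then for every unit vector η ∈ E one has slope_f(η) ≥ slope_f(ξ) · ⟨ξ, η⟩; i.e. the asymptotic slope of f is bounded below by slope_f(ξ) times the cosine of the angle to the direction of steepest asymptotic descent. -/

import Mathlib

open Filter

/-- If the asymptotic slope of a convex Lipschitz function attains a negative
minimum over the unit sphere at the unit vector `ξ`, then for every unit
vector `η` we have `slope_f(η) ≥ slope_f(ξ)·⟨ξ, η⟩`. -/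
theorem asymptotic_slope_lower_bound_by_steepest_descent
    {E : Type*} [NormedAddCommGroup E] [InnerProductSpace ℝ E]
    [FiniteDimensional ℝ E]
    (f : E → ℝ) (hconv : ConvexOn ℝ Set.univ f)
    (C : NNReal) (hlip : LipschitzWith C f)
    (s : E → ℝ)
    (hs : ∀ v : E, Tendsto (fun t : ℝ => f (t • v) / t) atTop (nhds (s v)))
    (ξ : E) (hξ : ‖ξ‖ = 1) (hneg : s ξ < 0)
    (hmin : ∀ η : E, ‖η‖ = 1 → s ξ ≤ s η) :
    ∀ η : E, ‖η‖ = 1 → s ξ * (inner ℝ ξ η : ℝ) ≤ s η := by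
  -- positive homogeneity of `s`
  have hhom : ∀ a : ℝ, 0 < a → ∀ v : E, s (a • v) = a * s v := by
    intro a ha v
    have h1 : Tendsto (fun t : ℝ => a * (f ((a * t) • v) / (a * t))) atTop
        (nhds (a * s v)) :=
      ((hs v).comp (tendsto_id.const_mul_atTop ha)).const_mul a
    have h2 : Tendsto (fun t : ℝ => f (t • (a • v)) / t) atTop (nhds (a * s v)) := by
      refine h1.congr' ?_
      filter_upwards [eventually_gt_atTop 0] with t ht
      have ha' := ha.ne'
      have ht' := ht.ne'
      rw [smul_smul, mul_comm t a]
      field_simp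
    exact tendsto_nhds_unique (hs (a • v)) h2
  -- `s 0 = 0`
  have hs0 : s 0 = 0 := by
    have h0 : Tendsto (fun t : ℝ => f (t • (0 : E)) / t) atTop (nhds 0) := by
      simp only [smul_zero]
      exact tendsto_const_nhds.div_atTop tendsto_id
    exact tendsto_nhds_unique (hs 0) h0
  -- subadditivity of `s`
  have hsub : ∀ u v : E, s (u + v) ≤ s u + s v := by
    intro u v
    have hu : Tendsto (fun t : ℝ => f ((2 * t) • u) / (2 * t)) atTop (nhds (s u)) :=
      (hs u).comp (tendsto_id.const_mul_atTop two_pos)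
    have hv : Tendsto (fun t : ℝ => f ((2 * t) • v) / (2 * t)) atTop (nhds (s v)) :=
      (hs v).comp (tendsto_id.const_mul_atTop two_pos)
    have key : ∀ᶠ t : ℝ in atTop, f (t • (u + v)) / t ≤
        f ((2 * t) • u) / (2 * t) + f ((2 * t) • v) / (2 * t) := by
      filter_upwards [eventually_gt_atTop 0] with t ht
      have hci := hconv.2 (Set.mem_univ ((2 * t) • u)) (Set.mem_univ ((2 * t) • v))
        (by norm_num : (0:ℝ) ≤ 1/2) (by norm_num : (0:ℝ) ≤ 1/2) (by norm_num)
      have heq : (1/2 : ℝ) • ((2 * t) • u) + (1/2 : ℝ) • ((2 * t) • v) = t • (u + v) := by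
        have h12 : (1/2 : ℝ) * (2 * t) = t := by ring
        rw [smul_smul, smul_smul, h12, smul_add]
      rw [heq] at hci
      have hrw : f ((2 * t) • u) / (2 * t) + f ((2 * t) • v) / (2 * t)
          = ((1/2 : ℝ) * f ((2 * t) • u) + (1/2 : ℝ) * f ((2 * t) • v)) / t := by
        field_simp
      rw [hrw]
      gcongr
      simpa using hci
    exact le_of_tendsto_of_tendsto (hs (u + v)) (hu.add hv) key
  -- lower bound `s ξ * ‖v‖ ≤ s v`
  have hlow : ∀ v : E, s ξ * ‖v‖ ≤ s v := by
    intro v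
    rcases eq_or_ne v 0 with rfl | hv
    · simp [hs0]
    · have hn : 0 < ‖v‖ := norm_pos_iff.mpr hv
      have hu1 : ‖(‖v‖⁻¹ • v)‖ = 1 := by
        rw [norm_smul, norm_inv, norm_norm, inv_mul_cancel₀ hn.ne']
      have h1 := hmin _ hu1
      have h2 : s v = ‖v‖ * s (‖v‖⁻¹ • v) := by
        rw [← hhom _ hn, smul_smul, mul_inv_cancel₀ hn.ne', one_smul]
      rw [h2, mul_comm (s ξ)]
      exact mul_le_mul_of_nonneg_left h1 hn.le
  intro η hη
  set c : ℝ := inner ℝ ξ η with hc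
  have key : ∀ t : ℝ, 0 < t → s ξ * ((2 * c + t) / (‖ξ + t • η‖ + 1)) ≤ s η := by
    intro t ht
    set N := ‖ξ + t • η‖ with hNdef
    have hN0 : 0 ≤ N := norm_nonneg _
    have hNsq : N ^ 2 = 1 + 2 * (t * c) + t ^ 2 := by
      rw [hNdef, norm_add_sq_real, real_inner_smul_right, norm_smul, hξ, hη]
      simp only [Real.norm_eq_abs, abs_of_pos ht, mul_one, one_pow, ← hc]
    have h1 : s ξ * N ≤ s ξ + t * s η := by
      calc s ξ * N ≤ s (ξ + t • η) := hlow _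
        _ ≤ s ξ + s (t • η) := hsub _ _
        _ = s ξ + t * s η := by rw [hhom t ht]
    have heq : (2 * c + t) / (N + 1) = (N - 1) / t := by
      rw [div_eq_div_iff (by linarith) ht.ne']
      linear_combination -hNsq
    rw [heq, ← mul_div_assoc, div_le_iff₀ ht]
    have h2 : s ξ * (N - 1) = s ξ * N - s ξ := by ring
    linarith
  have hcont : Tendsto (fun t : ℝ => s ξ * ((2 * c + t) / (‖ξ + t • η‖ + 1)))
      (nhdsWithin 0 (Set.Ioi 0)) (nhds (s ξ * c)) := by
    have hcden : Continuous fun t : ℝ => ‖ξ + t • η‖ + 1 :=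
      ((continuous_const.add (continuous_id.smul continuous_const)).norm).add
        continuous_const
    have hden : Tendsto (fun t : ℝ => ‖ξ + t • η‖ + 1) (nhds 0) (nhds 2) :=
      hcden.tendsto' 0 2 (by norm_num [hξ])
    have hnum : Tendsto (fun t : ℝ => 2 * c + t) (nhds 0) (nhds (2 * c)) :=
      (continuous_const.add continuous_id).tendsto' 0 (2 * c) (by norm_num)
    have hT : Tendsto (fun t : ℝ => s ξ * ((2 * c + t) / (‖ξ + t • η‖ + 1)))
        (nhds 0) (nhds (s ξ * (2 * c / 2))) :=
      (tendsto_const_nhds (x := s ξ)).mul (hnum.div hden two_ne_zero)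
    have h2 : s ξ * (2 * c / 2) = s ξ * c := by ring
    rw [h2] at hT
    exact hT.mono_left nhdsWithin_le_nhds
  refine le_of_tendsto hcont ?_
  filter_upwards [self_mem_nhdsWithin] with t ht
  exact key t ht
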